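/- (Proposition 5.4: 2-bounding implies d_Δ is a distance.) Assume E ⊆ ℂ^d is open, every entry of Δ is holomorphic on E, and B_Δ is a nonempty connected open set. Suppose B_Δ is 2-bounding, i.e., sup{ ‖T^r‖ : 1 ≤ r ≤ d, T a generic tuple with σ(T) ⊆ B_Δ and ‖Δ(T)‖ ≤ 1 } < ∞. Then for all z, w ∈ B_Δ, d_Δ(z, w) = 0 implies z = w. -/

import Mathlib

open scoped Matrix.Norms.L2Operator ComplexOrder
open Matrix

noncomputable section

section AuxLemmas

lemma coord_le_euclid {n : Type*} [Fintype n] (y : n → ℂ) (i : n) :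
    ‖y i‖ ≤ ‖(WithLp.equiv 2 (n → ℂ)).symm y‖ := by
  rw [EuclideanSpace.norm_eq]
  rw [show ‖y i‖ = Real.sqrt (‖y i‖ ^ 2) from (Real.sqrt_sq (norm_nonneg _)).symm]
  apply Real.sqrt_le_sqrt
  exact Finset.single_le_sum (f := fun j => ‖y j‖ ^ 2) (fun j _ => by positivity) (Finset.mem_univ i)

lemma euclid_norm_sq {n : Type*} [Fintype n] (y : n → ℂ) :
    ‖(WithLp.equiv 2 (n → ℂ)).symm y‖ ^ 2 = ∑ i, ‖y i‖ ^ 2 := by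
  rw [EuclideanSpace.norm_eq, Real.sq_sqrt (Finset.sum_nonneg fun i _ => sq_nonneg _)]
  rfl

lemma entry_le_l2_opNorm {m n : Type*} [Fintype m] [Fintype n] [DecidableEq n]
    (A : Matrix m n ℂ) (i : m) (j : n) : ‖A i j‖ ≤ ‖A‖ := by
  have h := A.l2_opNorm_mulVec ((WithLp.equiv 2 (n → ℂ)).symm (Pi.single j 1))
  have h1 : ‖(WithLp.equiv 2 (n → ℂ)).symm (Pi.single j (1:ℂ))‖ = 1 := by
    rw [show (WithLp.equiv 2 (n → ℂ)).symm (Pi.single j (1:ℂ)) = EuclideanSpace.single j 1 from rfl,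
      EuclideanSpace.norm_single, norm_one]
  have h2 : ‖A i j‖ ≤
      ‖(EuclideanSpace.equiv m ℂ).symm (A *ᵥ (WithLp.equiv 2 (n → ℂ)).symm (Pi.single j 1))‖ := by
    have hv : (A *ᵥ (WithLp.equiv 2 (n → ℂ)).symm (Pi.single j 1)) = fun i' => A i' j := by
      show A *ᵥ Pi.single j 1 = _
      rw [Matrix.mulVec_single]
      simp
      rfl
    rw [hv]
    exact coord_le_euclid (fun i' => A i' j) i
  calc ‖A i j‖ ≤ _ := h2
    _ ≤ ‖A‖ * 1 := by rw [← h1]; exact h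
    _ = ‖A‖ := mul_one _

lemma l2_opNorm_le_of_mulVec {m n : Type*} [Fintype m] [Fintype n] [DecidableEq n]
    (A : Matrix m n ℂ) {C : ℝ} (hC : 0 ≤ C)
    (h : ∀ x : n → ℂ, ‖(WithLp.equiv 2 (m → ℂ)).symm (A *ᵥ x)‖ ≤
      C * ‖(WithLp.equiv 2 (n → ℂ)).symm x‖) : ‖A‖ ≤ C := by
  rw [Matrix.l2_opNorm_def]
  apply ContinuousLinearMap.opNorm_le_bound _ hC
  intro x
  have := h (WithLp.equiv 2 (n → ℂ) x)
  simpa [Matrix.toEuclideanLin_apply] using this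

lemma dot_star_self {n : Type*} [Fintype n] (u : n → ℂ) :
    star u ⬝ᵥ u = ((‖(WithLp.equiv 2 (n → ℂ)).symm u‖ ^ 2 : ℝ) : ℂ) := by
  rw [EuclideanSpace.norm_eq, Real.sq_sqrt (Finset.sum_nonneg fun i _ => sq_nonneg _)]
  rw [dotProduct]
  push_cast
  apply Finset.sum_congr rfl
  intro i _
  simp only [Pi.star_apply, Complex.star_def]
  rw [show ((WithLp.equiv 2 (n → ℂ)).symm u) i = u i from rfl]
  rw [mul_comm, Complex.mul_conj, Complex.normSq_eq_norm_sq]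
  norm_num

lemma mulVec_euclid_le {m n : Type*} [Fintype m] [Fintype n] [DecidableEq n]
    (A : Matrix m n ℂ) (x : n → ℂ) :
    ‖(WithLp.equiv 2 (m → ℂ)).symm (A *ᵥ x)‖ ≤ ‖A‖ * ‖(WithLp.equiv 2 (n → ℂ)).symm x‖ :=
  A.l2_opNorm_mulVec ((WithLp.equiv 2 (n → ℂ)).symm x)

/-- if `‖B‖ < 1` then `1 - B * Bᴴ` is positive definite -/
lemma posDef_one_sub_mul_conjTranspose {m n : Type*} [Fintype m] [Fintype n]
    [DecidableEq m] [DecidableEq n] (B : Matrix m n ℂ) (hB : ‖B‖ < 1) :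
    (1 - B * Bᴴ).PosDef := by
  rw [Matrix.posDef_iff_dotProduct_mulVec]
  constructor
  · exact (Matrix.isHermitian_one (n := m) (α := ℂ)).sub
      (Matrix.isHermitian_mul_conjTranspose_self B)
  · intro x hx
    have hxp : (0:ℝ) < ‖(WithLp.equiv 2 (m → ℂ)).symm x‖ := by
      rw [norm_pos_iff]
      exact fun h => hx (by simpa using congrArg (WithLp.equiv 2 (m → ℂ)) h)
    have hy : ‖(WithLp.equiv 2 (n → ℂ)).symm (Bᴴ *ᵥ x)‖ ≤
        ‖B‖ * ‖(WithLp.equiv 2 (m → ℂ)).symm x‖ := by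
      have := mulVec_euclid_le Bᴴ x
      rwa [Matrix.l2_opNorm_conjTranspose] at this
    have hylt : ‖(WithLp.equiv 2 (n → ℂ)).symm (Bᴴ *ᵥ x)‖ < ‖(WithLp.equiv 2 (m → ℂ)).symm x‖ :=
      lt_of_le_of_lt hy (by nlinarith [norm_nonneg ((WithLp.equiv 2 (n → ℂ)).symm (Bᴴ *ᵥ x))])
    have key : star x ⬝ᵥ ((1 - B * Bᴴ) *ᵥ x) =
        ((‖(WithLp.equiv 2 (m → ℂ)).symm x‖ ^ 2 -
          ‖(WithLp.equiv 2 (n → ℂ)).symm (Bᴴ *ᵥ x)‖ ^ 2 : ℝ) : ℂ) := by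
      rw [Matrix.sub_mulVec, dotProduct_sub, Matrix.one_mulVec]
      rw [← Matrix.mulVec_mulVec, Matrix.dotProduct_mulVec (star x) B]
      have hst : star x ᵥ* B = star (Bᴴ *ᵥ x) := by
        rw [Matrix.star_mulVec, Matrix.conjTranspose_conjTranspose]
      rw [hst, dot_star_self, dot_star_self]
      push_cast
      ring
    rw [key]
    rw [show (0:ℂ) = ((0:ℝ):ℂ) from rfl, Complex.real_lt_real]
    have := pow_lt_pow_left₀ hylt (norm_nonneg _) (two_ne_zero)
    linarith

lemma det_one_sub_ne_zero {n : Type*} [Fintype n] [DecidableEq n]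
    (M : Matrix n n ℂ) (h : ‖M‖ < 1) : (1 - M).det ≠ 0 := by
  intro hdet
  obtain ⟨v, hv0, hv⟩ := (Matrix.exists_mulVec_eq_zero_iff).mpr hdet
  have hvM : v = M *ᵥ v := by
    rw [Matrix.sub_mulVec, Matrix.one_mulVec, sub_eq_zero] at hv
    exact hv
  have hnv : (0:ℝ) < ‖(WithLp.equiv 2 (n → ℂ)).symm v‖ := by
    rw [norm_pos_iff]
    exact fun h' => hv0 (by simpa using congrArg (WithLp.equiv 2 (n → ℂ)) h')
  have := mulVec_euclid_le M v
  rw [← hvM] at this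
  nlinarith

lemma kron_one_norm_le {m n : Type*} [Fintype m] [Fintype n] [DecidableEq m] [DecidableEq n]
    (A : Matrix m n ℂ) :
    ‖(Matrix.of fun (p : m × Fin 2) (q : n × Fin 2) =>
        A p.1 q.1 * (if p.2 = q.2 then (1:ℂ) else 0))‖ ≤ ‖A‖ := by
  set K : Matrix (m × Fin 2) (n × Fin 2) ℂ :=
    Matrix.of fun p q => A p.1 q.1 * (if p.2 = q.2 then (1:ℂ) else 0) with hK
  apply l2_opNorm_le_of_mulVec _ (norm_nonneg A)
  intro x
  have hmv : ∀ p : m × Fin 2, (K *ᵥ x) p = (A *ᵥ fun q => x (q, p.2)) p.1 := by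
    intro p
    simp only [Matrix.mulVec, dotProduct, hK, Matrix.of_apply, Fintype.sum_prod_type]
    refine Finset.sum_congr rfl fun q1 _ => ?_
    rw [show ∑ q2 : Fin 2, A p.1 q1 * (if p.2 = q2 then (1:ℂ) else 0) * x (q1, q2)
          = ∑ q2 : Fin 2, (if p.2 = q2 then A p.1 q1 * x (q1, q2) else 0) from
        Finset.sum_congr rfl (fun q2 _ => by by_cases h : p.2 = q2 <;> simp [h])]
    rw [Finset.sum_ite_eq]
    simp
  have key : ‖(WithLp.equiv 2 ((m × Fin 2) → ℂ)).symm (K *ᵥ x)‖ ^ 2 ≤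
      (‖A‖ * ‖(WithLp.equiv 2 ((n × Fin 2) → ℂ)).symm x‖) ^ 2 := by
    rw [euclid_norm_sq]
    have e1 : ∑ p : m × Fin 2, ‖(K *ᵥ x) p‖ ^ 2
        = ∑ j : Fin 2, ∑ i : m, ‖(A *ᵥ fun q => x (q, j)) i‖ ^ 2 := by
      rw [Fintype.sum_prod_type, Finset.sum_comm]
      exact Finset.sum_congr rfl fun j _ => Finset.sum_congr rfl fun i _ => by rw [hmv]
    rw [e1]
    have e2 : ∀ j : Fin 2, ∑ i : m, ‖(A *ᵥ fun q => x (q, j)) i‖ ^ 2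
        ≤ ‖A‖ ^ 2 * ∑ q : n, ‖x (q, j)‖ ^ 2 := by
      intro j
      have h1 := mulVec_euclid_le A (fun q => x (q, j))
      have h2 := pow_le_pow_left₀ (norm_nonneg _) h1 2
      rw [mul_pow, euclid_norm_sq, euclid_norm_sq] at h2
      exact h2
    calc ∑ j : Fin 2, ∑ i : m, ‖(A *ᵥ fun q => x (q, j)) i‖ ^ 2
        ≤ ∑ j : Fin 2, ‖A‖ ^ 2 * ∑ q : n, ‖x (q, j)‖ ^ 2 :=
          Finset.sum_le_sum fun j _ => e2 j
      _ = ‖A‖ ^ 2 * ∑ j : Fin 2, ∑ q : n, ‖x (q, j)‖ ^ 2 := by rw [Finset.mul_sum]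
      _ = (‖A‖ * ‖(WithLp.equiv 2 ((n × Fin 2) → ℂ)).symm x‖) ^ 2 := by
          rw [mul_pow, euclid_norm_sq, Fintype.sum_prod_type, Finset.sum_comm]
  have := Real.sqrt_le_sqrt key
  rwa [Real.sqrt_sq (norm_nonneg _), Real.sqrt_sq (by positivity)] at this

end AuxLemmas

open scoped Classical in
/-- Square root of a positive semidefinite matrix (junk value `0` otherwise). -/
def msqrt {n' : Type*} [Fintype n'] [DecidableEq n'] (M : Matrix n' n' ℂ) : Matrix n' n' ℂ :=
  if h : M.PosSemidef then
    (h.isHermitian.eigenvectorUnitary : Matrix n' n' ℂ) *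
      diagonal ((↑) ∘ Real.sqrt ∘ h.isHermitian.eigenvalues) *
      star (h.isHermitian.eigenvectorUnitary : Matrix n' n' ℂ) else 0

lemma msqrt_det_ne_zero {n : Type*} [Fintype n] [DecidableEq n]
    {M : Matrix n n ℂ} (hM : M.PosDef) : (msqrt M).det ≠ 0 := by
  have hps : M.PosSemidef := hM.posSemidef
  rw [msqrt, dif_pos hps]
  rw [Matrix.det_mul, Matrix.det_mul, mul_right_comm, ← Matrix.det_mul,
    Unitary.mul_star_self_of_mem (hps.isHermitian.eigenvectorUnitary).prop, Matrix.det_one, one_mul,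
    Matrix.det_diagonal]
  rw [Finset.prod_ne_zero_iff]
  intro i _
  simp only [Function.comp_apply, ne_eq, Complex.ofReal_eq_zero]
  exact (Real.sqrt_pos.mpr (hM.eigenvalues_pos i)).ne'

/-- The pseudo-distance `d_Δ`. -/
def dDelta {α m' n' : Type*} [Fintype m'] [Fintype n'] [DecidableEq m'] [DecidableEq n']
    (Δ : α → Matrix m' n' ℂ) (z w : α) : ℝ :=
  ‖(msqrt (1 - Δ w * (Δ w)ᴴ))⁻¹ * ((Δ z - Δ w) *
      ((1 - (Δ w)ᴴ * Δ z)⁻¹ * msqrt (1 - (Δ w)ᴴ * Δ w)))‖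

/-- `B_Δ = {z ∈ E : ‖Δ(z)‖ < 1}`. -/
def BDelta {α m' n' : Type*} [Fintype m'] [Fintype n'] [DecidableEq n'] (E : Set α)
    (Δ : α → Matrix m' n' ℂ) : Set α :=
  {z | z ∈ E ∧ ‖Δ z‖ < 1}

/-- pseudo-hyperbolic distance on the unit disk -/
def dDisk (a b : ℂ) : ℝ := ‖a - b‖ / ‖1 - (starRingEnd ℂ) b * a‖

/-- elementary tensor `ξ ⊗ v` in `ℂ^m ⊗ ℂ^2`, realized as a function on `m × Fin 2` -/
def tpr {m' : Type*} (ξ : m' → ℂ) (v : Fin 2 → ℂ) : m' × Fin 2 → ℂ :=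
  fun p => ξ p.1 * v p.2

/-- inner product, conjugate-linear in the second variable -/
def herm {m' : Type*} [Fintype m'] (ξ η : m' → ℂ) : ℂ :=
  ∑ p, ξ p * (starRingEnd ℂ) (η p)

/-- positive semidefiniteness of a `2 × 2` kernel `(a i j)` -/
def PSD2 (a : Fin 2 → Fin 2 → ℂ) : Prop :=
  ∀ c : Fin 2 → ℂ, 0 ≤ ∑ i, ∑ j, a i j * c i * (starRingEnd ℂ) (c j)

/-- `T` is a generic tuple with joint eigenvectors `v` and joint eigenvalues `z 0 ≠ z 1`. -/
def IsGenericTuple {d : ℕ} (T : Fin d → Matrix (Fin 2) (Fin 2) ℂ)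
    (v : Fin 2 → Fin 2 → ℂ) (z : Fin 2 → Fin d → ℂ) : Prop :=
  LinearIndependent ℂ v ∧ z 0 ≠ z 1 ∧ ∀ i j, T i *ᵥ v j = z j i • v j

/-- `‖Δ(T)‖ ≤ 1`, where `Δ(T)` is the matrix on `ℂ^s ⊗ ℂ^2` determined by
`Δ(T)(e_i ⊗ v_j) = (Δ(z_j) e_i) ⊗ v_j`. -/
def DeltaTContract {β : Type*} {s r : ℕ} (Δ : β → Matrix (Fin s) (Fin r) ℂ)
    (v : Fin 2 → Fin 2 → ℂ) (z : Fin 2 → β) : Prop :=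
  ∀ DT : Matrix (Fin s × Fin 2) (Fin r × Fin 2) ℂ,
    (∀ (i : Fin r) (j : Fin 2),
      DT *ᵥ tpr (Pi.single i 1) (v j) = tpr (Δ (z j) *ᵥ Pi.single i 1) (v j)) →
    ‖DT‖ ≤ 1

/-- membership in the class `S_{2,gen}(B_Δ)` -/
def MemS2gen {d s r : ℕ} (E : Set (Fin d → ℂ)) (Δ : (Fin d → ℂ) → Matrix (Fin s) (Fin r) ℂ)
    (f : (Fin d → ℂ) → ℂ) : Prop :=
  ∀ (T : Fin d → Matrix (Fin 2) (Fin 2) ℂ) (v : Fin 2 → Fin 2 → ℂ) (z : Fin 2 → Fin d → ℂ),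
    IsGenericTuple T v z → (∀ j, z j ∈ BDelta E Δ) → DeltaTContract Δ v z →
    ∀ fT : Matrix (Fin 2) (Fin 2) ℂ, (∀ j, fT *ᵥ v j = f (z j) • v j) → ‖fT‖ ≤ 1

/-- the Möbius pseudo-distance of a domain `Ω` -/
def dMobius {α : Type*} [NormedAddCommGroup α] [NormedSpace ℂ α] (Ω : Set α) (z w : α) : ℝ :=
  sSup {x | ∃ g : α → ℂ, DifferentiableOn ℂ g Ω ∧ (∀ ζ ∈ Ω, ‖g ζ‖ < 1) ∧ x = dDisk (g z) (g w)}

/-- `Ω` is a complete spectral domain for the diagonalizable tuple with eigenvectors `v` and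
joint eigenvalues `z 0, z 1`. -/
def IsCompleteSpectralDomainFor {α : Type*} [NormedAddCommGroup α] [NormedSpace ℂ α]
    (Ω : Set α) (v : Fin 2 → Fin 2 → ℂ) (z : Fin 2 → α) : Prop :=
  ∀ (n : ℕ) (F : α → Matrix (Fin n) (Fin n) ℂ),
    (∀ i j, DifferentiableOn ℂ (fun ζ => F ζ i j) Ω) →
    ∀ C : ℝ, (∀ ζ ∈ Ω, ‖F ζ‖ ≤ C) →
    ∀ FT : Matrix (Fin n × Fin 2) (Fin n × Fin 2) ℂ,
      (∀ (ξ : Fin n → ℂ) (j : Fin 2), FT *ᵥ tpr ξ (v j) = tpr (F (z j) *ᵥ ξ) (v j)) →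
      ‖FT‖ ≤ C

/-- **Proposition 5.4**: if `B_Δ` is 2-bounding then `d_Δ` is a distance on `B_Δ`. -/
theorem dDelta_dist_of_twoBounding {d s r : ℕ} (E : Set (Fin d → ℂ)) (hEopen : IsOpen E)
    (Δ : (Fin d → ℂ) → Matrix (Fin s) (Fin r) ℂ)
    (hΔ : ∀ p q, DifferentiableOn ℂ (fun ζ => Δ ζ p q) E)
    (hconn : IsConnected (BDelta E Δ)) (hopen : IsOpen (BDelta E Δ))
    -- `B_Δ` is 2-bounding:
    (hbound : ∃ Cb : ℝ, ∀ (T : Fin d → Matrix (Fin 2) (Fin 2) ℂ) (v : Fin 2 → Fin 2 → ℂ)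
      (zz : Fin 2 → Fin d → ℂ), IsGenericTuple T v zz → (∀ j, zz j ∈ BDelta E Δ) →
      DeltaTContract Δ v zz → ∀ i, ‖T i‖ ≤ Cb)
    (z w : Fin d → ℂ) (hz : z ∈ BDelta E Δ) (hw : w ∈ BDelta E Δ)
    (h0 : dDelta Δ z w = 0) : z = w := by
  classical
  have hz1 : ‖Δ z‖ < 1 := hz.2
  have hw1 : ‖Δ w‖ < 1 := hw.2
  -- Step 1 : `Δ z = Δ w`
  have hPD1 : (1 - Δ w * (Δ w)ᴴ).PosDef := posDef_one_sub_mul_conjTranspose _ hw1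
  have hPD2 : (1 - (Δ w)ᴴ * Δ w).PosDef := by
    have := posDef_one_sub_mul_conjTranspose (Δ w)ᴴ
      (by rwa [Matrix.l2_opNorm_conjTranspose])
    rwa [Matrix.conjTranspose_conjTranspose] at this
  have hdP : (msqrt (1 - Δ w * (Δ w)ᴴ)).det ≠ 0 := msqrt_det_ne_zero hPD1
  have hdC : (1 - (Δ w)ᴴ * Δ z).det ≠ 0 := by
    apply det_one_sub_ne_zero
    calc ‖(Δ w)ᴴ * Δ z‖ ≤ ‖(Δ w)ᴴ‖ * ‖Δ z‖ := Matrix.l2_opNorm_mul _ _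
      _ = ‖Δ w‖ * ‖Δ z‖ := by rw [Matrix.l2_opNorm_conjTranspose]
      _ < 1 := by nlinarith [norm_nonneg (Δ w), norm_nonneg (Δ z)]
  have hdQ : ((1 - (Δ w)ᴴ * Δ z)⁻¹ * msqrt (1 - (Δ w)ᴴ * Δ w)).det ≠ 0 := by
    rw [Matrix.det_mul, Matrix.det_nonsing_inv, Ring.inverse_eq_inv]
    exact mul_ne_zero (inv_ne_zero hdC) (msqrt_det_ne_zero hPD2)
  have hX : (msqrt (1 - Δ w * (Δ w)ᴴ))⁻¹ * ((Δ z - Δ w) *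
      ((1 - (Δ w)ᴴ * Δ z)⁻¹ * msqrt (1 - (Δ w)ᴴ * Δ w))) = 0 := by
    rw [dDelta] at h0
    exact norm_eq_zero.mp h0
  have hY : (Δ z - Δ w) * ((1 - (Δ w)ᴴ * Δ z)⁻¹ * msqrt (1 - (Δ w)ᴴ * Δ w)) = 0 := by
    have h1 := congrArg (fun M => msqrt (1 - Δ w * (Δ w)ᴴ) * M) hX
    simp only [← Matrix.mul_assoc] at h1
    rw [Matrix.mul_nonsing_inv _ (isUnit_iff_ne_zero.mpr hdP), Matrix.one_mul,
      Matrix.mul_zero] at h1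
    rw [Matrix.mul_assoc] at h1
    exact h1
  have hA : Δ z = Δ w := by
    have h1 := congrArg
      (fun M => M * ((1 - (Δ w)ᴴ * Δ z)⁻¹ * msqrt (1 - (Δ w)ᴴ * Δ w))⁻¹) hY
    rw [Matrix.mul_assoc, Matrix.mul_nonsing_inv _ (isUnit_iff_ne_zero.mpr hdQ),
      Matrix.mul_one, Matrix.zero_mul] at h1
    exact sub_eq_zero.mp h1
  -- Step 2 : suppose `z ≠ w` and derive a contradiction
  by_contra hne
  obtain ⟨i0, hi0⟩ := Function.ne_iff.mp hne
  obtain ⟨Cb, hCb⟩ := hbound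
  set δ : ℝ := ‖w i0 - z i0‖ with hδdef
  have hδ : 0 < δ := by
    rw [hδdef, norm_pos_iff]
    exact sub_ne_zero.mpr (Ne.symm hi0)
  set c : ℝ := max Cb 0 + 1 with hcdef
  have hc : 0 < c := by positivity
  have hCbc : Cb < c := lt_of_le_of_lt (le_max_left _ _) (by rw [hcdef]; linarith)
  set ε : ℂ := ((δ / c : ℝ) : ℂ) with hεdef
  have hε : ε ≠ 0 := by
    rw [hεdef]
    exact_mod_cast ne_of_gt (div_pos hδ hc)
  have hεnorm : ‖ε‖ = δ / c := by
    rw [hεdef, Complex.norm_real, Real.norm_eq_abs, abs_of_pos (div_pos hδ hc)]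
  set v : Fin 2 → Fin 2 → ℂ := ![![1, 0], ![1, ε]] with hvdef
  set zz : Fin 2 → Fin d → ℂ := ![z, w] with hzzdef
  set T : Fin d → Matrix (Fin 2) (Fin 2) ℂ :=
    fun i => !![z i, (w i - z i) / ε; 0, w i] with hTdef
  have hgen : IsGenericTuple T v zz := by
    refine ⟨?_, ?_, ?_⟩
    · rw [hvdef]
      rw [linearIndependent_fin2]
      constructor
      · intro h
        have := congrFun h 0
        simp at this
      · intro a h
        have h0' := congrFun h 0
        have h1' := congrFun h 1
        simp at h0' h1'
        rw [h0'] at h1'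
        simp at h1'
        exact hε h1'
    · simp [hzzdef]
      exact hne
    · intro i j
      fin_cases j <;> funext p <;> fin_cases p <;>
        simp [hTdef, hvdef, hzzdef, Matrix.mulVec, dotProduct, Fin.sum_univ_two] <;>
        field_simp <;>
        ring
  have hmem : ∀ j, zz j ∈ BDelta E Δ := by
    intro j
    fin_cases j
    · simpa [hzzdef] using hz
    · simpa [hzzdef] using hw
  have hcon : DeltaTContract Δ v zz := by
    intro DT hDT
    -- identify `DT` with `Δ w ⊗ 1`
    have hDTeq : DT = Matrix.of fun (p : Fin s × Fin 2) (q : Fin r × Fin 2) =>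
        Δ w p.1 q.1 * (if p.2 = q.2 then (1:ℂ) else 0) := by
      have col0 : ∀ (q1 : Fin r) (p : Fin s × Fin 2),
          DT p (q1, 0) = Δ w p.1 q1 * (![1, 0] : Fin 2 → ℂ) p.2 := by
        intro q1 p
        have h := congrFun (hDT q1 0) p
        have e0 : tpr (Pi.single q1 (1:ℂ)) (v 0) = Pi.single ((q1, (0:Fin 2))) 1 := by
          funext a
          rcases a with ⟨a1, a2⟩
          fin_cases a2 <;> simp [tpr, hvdef, Pi.single_apply, Prod.ext_iff]
        rw [e0] at h
        rw [Matrix.mulVec_single] at h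
        simp only [mul_one, Pi.smul_apply, op_smul_eq_mul, Matrix.col_apply] at h
        rw [h]
        have : Δ (zz 0) = Δ w := by rw [hzzdef]; simp; exact hA
        rw [tpr, this]
        simp [Matrix.mulVec_single, hvdef]
      have col1 : ∀ (q1 : Fin r) (p : Fin s × Fin 2),
          DT p (q1, 1) = Δ w p.1 q1 * (![0, 1] : Fin 2 → ℂ) p.2 := by
        intro q1 p
        have h := congrFun (hDT q1 1) p
        have e1 : tpr (Pi.single q1 (1:ℂ)) (v 1) =
            (Pi.single ((q1, (0:Fin 2))) (1:ℂ) : Fin r × Fin 2 → ℂ) +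
              ε • (Pi.single ((q1, (1:Fin 2))) (1:ℂ) : Fin r × Fin 2 → ℂ) := by
          funext a
          rcases a with ⟨a1, a2⟩
          fin_cases a2 <;>
            simp [tpr, hvdef, Pi.single_apply, Prod.ext_iff, mul_comm]
        rw [e1, Matrix.mulVec_add, Matrix.mulVec_smul, Matrix.mulVec_single,
          Matrix.mulVec_single] at h
        simp only [mul_one, Pi.add_apply, Pi.smul_apply, smul_eq_mul, op_smul_eq_mul,
          Matrix.col_apply] at h
        have hz0 : Δ (zz 1) = Δ w := by rw [hzzdef]; simp
        rw [tpr, hz0] at h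
        rw [col0 q1 p] at h
        -- h : Δ w p.1 q1 * ![1,0] p.2 + ε * DT p (q1,1) = (Δ w *ᵥ Pi.single q1 1) p.1 * v 1 p.2
        have hv1 : (v 1) p.2 = (![1, 0] : Fin 2 → ℂ) p.2 + ε * (![0, 1] : Fin 2 → ℂ) p.2 := by
          rw [hvdef]
          rcases p with ⟨p1, p2⟩
          fin_cases p2 <;> simp
        rw [Matrix.mulVec_single] at h
        simp only [mul_one, Pi.smul_apply, op_smul_eq_mul, Matrix.col_apply] at h
        rw [hv1] at h
        have h' : ε * DT p (q1, 1) = ε * (Δ w p.1 q1 * (![0, 1] : Fin 2 → ℂ) p.2) := by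
          ring_nf
          ring_nf at h
          linear_combination h
        exact mul_left_cancel₀ hε h'
      funext p q
      rcases q with ⟨q1, q2⟩
      rcases p with ⟨p1, p2⟩
      fin_cases q2 <;> fin_cases p2 <;>
        simp_all [col0, col1, Matrix.of_apply]
    rw [hDTeq]
    exact le_trans (kron_one_norm_le (Δ w)) hw1.le
  -- Step 3 : the norm of `T i0` exceeds the bound
  have hT := hCb T v zz hgen hmem hcon i0
  have hent := entry_le_l2_opNorm (T i0) 0 1
  have hentval : (T i0) 0 1 = (w i0 - z i0) / ε := by rw [hTdef]; simp
  rw [hentval] at hent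
  have : ‖(w i0 - z i0) / ε‖ = c := by
    rw [norm_div, hεnorm, ← hδdef, div_div_eq_mul_div, mul_div_assoc]
    field_simp
  rw [this] at hent
  linarith
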